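/- arXiv:2408.01474 — 2 statements merged into one kernel-verified Lean document; each statement's English description precedes it below -/
import Mathlib

section
/- Let Σ_A be a nonempty two-sided subshift of finite type on M symbols with topological entropy h. Then Σ_A contains a periodic point of period at most 1 + M·e^{1-h}. -/
open Filter

/-- The shift map on two-sided sequences over `M` symbols. -/
def shiftMap (M : ℕ) : (ℤ → Fin M) → (ℤ → Fin M) := fun x i => x (i + 1)

/-- The two-sided subshift of finite type associated to the 0-1 transition matrix `A`. -/
def SFT {M : ℕ} (A : Fin M → Fin M → Prop) : Set (ℤ → Fin M) :=
  {x | ∀ i : ℤ, A (x i) (x (i + 1))}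

/-- The set of legal words of length `k` in the subshift `Σ_A`. -/
def legalWords {M : ℕ} (A : Fin M → Fin M → Prop) (k : ℕ) : Set (Fin k → Fin M) :=
  {w | ∃ x ∈ SFT A, ∀ i : Fin k, x ((i : ℕ) : ℤ) = w i}

/-- Topological entropy of the subshift `Σ_A`, computed as the exponential growth rate of the
number of legal words. -/
noncomputable def sftEntropy {M : ℕ} (A : Fin M → Fin M → Prop) : ℝ :=
  Filter.atTop.limsup fun k : ℕ => Real.log ((legalWords A k).ncard) / k

section Aux

variable {M : ℕ} (A : Fin M → Fin M → Prop)

/-- Cyclic word condition: `u` restricted to `[0, d)` is a closed walk in the digraph of `A`. -/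
def IsCW (d : ℕ) (u : ℕ → Fin M) : Prop := ∀ r, r < d → A (u r) (u ((r+1) % d))

/-- The set of periods of periodic points of the subshift. -/
def periodSet : Set ℕ := {k | 0 < k ∧ ∃ x ∈ SFT A, (shiftMap M)^[k] x = x}

lemma shift_iter (p : ℕ) (x : ℤ → Fin M) (i : ℤ) : (shiftMap M)^[p] x i = x (i + p) := by
  induction p generalizing x i with
  | zero => simp
  | succ n ih =>
    rw [Function.iterate_succ_apply, ih]
    show x (i + n + 1) = _
    congr 1
    push_cast
    ring

lemma sft_shift_iter (p : ℕ) {x : ℤ → Fin M} (hx : x ∈ SFT A) :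
    (shiftMap M)^[p] x ∈ SFT A := by
  intro i
  rw [shift_iter, shift_iter]
  have := hx (i + p)
  have e : i + 1 + (p:ℤ) = i + p + 1 := by ring
  rw [e]
  exact this

/-- A closed walk of length `d` in the digraph of `A` yields a periodic point of period `d`. -/
lemma cw_period {d : ℕ} (hd : 0 < d) {u : ℕ → Fin M} (hu : IsCW A d u) :
    ∃ y ∈ SFT A, (shiftMap M)^[d] y = y := by
  have hdz : (d:ℤ) ≠ 0 := by exact_mod_cast hd.ne'
  refine ⟨fun i => u ((i % (d:ℤ)).toNat), ?_, ?_⟩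
  · intro i
    have h0 : 0 ≤ i % (d:ℤ) := Int.emod_nonneg i hdz
    have h1 : i % (d:ℤ) < d := Int.emod_lt_of_pos i (by exact_mod_cast hd)
    set r := (i % (d:ℤ)).toNat with hr
    have hrd : r < d := by omega
    have hir : i % (d:ℤ) = (r:ℤ) := by omega
    have key : ((i+1) % (d:ℤ)).toNat = (r+1) % d := by
      have h2 : (i + 1) % (d:ℤ) = ((r:ℤ) + 1) % d := by
        rw [Int.add_emod i 1, ← hir, ← Int.add_emod]
        rw [Int.add_emod (i%(d:ℤ)) 1, Int.emod_emod_of_dvd _ dvd_rfl, ← Int.add_emod]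
      rw [h2]
      have : ((r:ℤ) + 1) % (d:ℤ) = (((r+1) % d : ℕ) : ℤ) := by
        push_cast
        rfl
      rw [this, Int.toNat_natCast]
    show A (u ((i % (d:ℤ)).toNat)) (u (((i+1) % (d:ℤ)).toNat))
    rw [key, ← hr]
    exact hu r hrd
  · funext i
    rw [shift_iter]
    have : (i + (d:ℤ)) % (d:ℤ) = i % d := by
      rw [Int.add_emod, Int.emod_self, add_zero, Int.emod_emod_of_dvd _ dvd_rfl]
    simp only [this]

lemma legal_nonempty (hne : (SFT A).Nonempty) (n : ℕ) : (legalWords A n).Nonempty := by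
  obtain ⟨x, hx⟩ := hne
  exact ⟨fun i => x ((i:ℕ):ℤ), x, hx, fun i => rfl⟩

lemma legal_one_le (hne : (SFT A).Nonempty) (n : ℕ) : 1 ≤ (legalWords A n).ncard :=
  (Set.ncard_pos (Set.toFinite _)).mpr (legal_nonempty A hne n)

lemma legal_subadd (m n : ℕ) :
    (legalWords A (m+n)).ncard ≤ (legalWords A m).ncard * (legalWords A n).ncard := by
  classical
  rw [Set.ncard_eq_toFinset_card _ ((legalWords A (m+n)).toFinite),
    Set.ncard_eq_toFinset_card _ ((legalWords A m).toFinite),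
    Set.ncard_eq_toFinset_card _ ((legalWords A n).toFinite), ← Finset.card_product]
  apply Finset.card_le_card_of_injOn
    (fun w => (fun i : Fin m => w ⟨(i:ℕ), by omega⟩, fun i : Fin n => w ⟨m + (i:ℕ), by omega⟩))
  · intro w hw
    rw [Finset.mem_coe, Set.Finite.mem_toFinset] at hw
    obtain ⟨x, hx, hxw⟩ := hw
    rw [Finset.mem_coe, Finset.mem_product, Set.Finite.mem_toFinset, Set.Finite.mem_toFinset]
    constructor
    · exact ⟨x, hx, fun i => hxw ⟨(i:ℕ), by omega⟩⟩
    · refine ⟨(shiftMap M)^[m] x, sft_shift_iter A m hx, fun i => ?_⟩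
      show (shiftMap M)^[m] x ((i:ℕ):ℤ) = w ⟨m + (i:ℕ), by omega⟩
      rw [shift_iter, ← hxw ⟨m + (i:ℕ), by omega⟩]
      show x ((i:ℕ) + (m:ℤ)) = x _
      congr 1
      push_cast
      ring
  · intro w1 h1 w2 h2 h
    simp only [Prod.mk.injEq] at h
    funext i
    by_cases hi : (i:ℕ) < m
    · have := congrFun h.1 ⟨(i:ℕ), hi⟩
      have e : (⟨(i:ℕ), by omega⟩ : Fin (m+n)) = i := by apply Fin.ext; rfl
      simpa [e] using this
    · have := congrFun h.2 ⟨(i:ℕ) - m, by omega⟩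
      have e : (⟨m + ((i:ℕ) - m), by omega⟩ : Fin (m+n)) = i := by
        apply Fin.ext
        show m + ((i:ℕ) - m) = (i:ℕ)
        omega
      simpa [e] using this

variable {A}

lemma sft_repeat {x : ℤ → Fin M} (hx : x ∈ SFT A) {a b : ℤ} (hab : a < b) (he : x a = x b) :
    IsCW A (b - a).toNat (fun r => x (a + r)) := by
  intro r hr
  set d := (b - a).toNat with hd
  have hdb : a + (d:ℤ) = b := by omega
  rcases eq_or_lt_of_le (Nat.succ_le_of_lt hr) with h1 | h1
  · have h1' : r + 1 = d := h1
    have : (r+1) % d = 0 := by rw [h1']; exact Nat.mod_self d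
    rw [this]
    have har : a + (r:ℤ) = b - 1 := by omega
    have := hx (b-1)
    simp only [har, sub_add_cancel] at *
    rw [← he] at this
    simpa using this
  · have : (r+1) % d = r+1 := Nat.mod_eq_of_lt h1
    rw [this]
    have := hx (a + r)
    have e : ((r:ℤ)+1) = ((r+1:ℕ):ℤ) := by push_cast; ring
    rw [add_assoc, e] at this
    exact this

/-- Any closed walk contains a closed walk with pairwise distinct vertices. -/
lemma exists_simple : ∀ d, 0 < d → ∀ u : ℕ → Fin M, IsCW A d u →
    ∃ d' u', 0 < d' ∧ IsCW A d' u' ∧ (∀ r, r < d' → ∃ s, s < d ∧ u' r = u s) ∧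
      ∀ r s, r < s → s < d' → u' r ≠ u' s := by
  intro d
  induction d using Nat.strong_induction_on with
  | _ d IH =>
    intro hd u hu
    by_cases hrep : ∃ b, b < d ∧ ∃ a, a < b ∧ u a = u b
    · obtain ⟨b, hbd, a, hab, he⟩ := hrep
      set e := b - a with he'
      have he1 : 0 < e := by omega
      have hed : e < d := by omega
      have hcw : IsCW A e (fun r => u (a + r)) := by
        intro r hr
        rcases eq_or_lt_of_le (Nat.succ_le_of_lt hr) with h1 | h1
        · have h1' : r + 1 = e := h1
          have h2 : (r+1) % e = 0 := by rw [h1']; exact Nat.mod_self e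
          have h3 : a + r = b - 1 := by omega
          have := hu (b-1) (by omega)
          have h4 : (b-1+1) % d = b := by
            have : b - 1 + 1 = b := by omega
            rw [this, Nat.mod_eq_of_lt hbd]
          rw [h4, ← he] at this
          simp only [h2, h3, add_zero]
          exact this
        · have h2 : (r+1) % e = r+1 := Nat.mod_eq_of_lt h1
          have := hu (a+r) (by omega)
          have h3 : (a+r+1) % d = a + (r+1) := by
            rw [Nat.mod_eq_of_lt (by omega)]
            ring
          rw [h3] at this
          simp only [h2]
          exact this
      obtain ⟨d', u', h1, h2, h3, h4⟩ := IH e hed he1 _ hcw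
      refine ⟨d', u', h1, h2, fun r hr => ?_, h4⟩
      obtain ⟨s, hs, hval⟩ := h3 r hr
      exact ⟨a + s, by omega, hval⟩
    · push_neg at hrep
      exact ⟨d, u, hd, hu, fun r hr => ⟨r, hr, rfl⟩,
        fun r s hrs hsd hne => hrep s hsd r hrs hne⟩

/-- If the minimal period exceeds `j`, every legal word of length `j` is injective. -/
lemma legal_word_injective {j : ℕ} (hjg : j < sInf (periodSet A)) {w : Fin j → Fin M}
    (hw : w ∈ legalWords A j) : Function.Injective w := by
  obtain ⟨x, hx, hxw⟩ := hw
  have key : ∀ a b : Fin j, (a:ℕ) < (b:ℕ) → w a ≠ w b := by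
    intro a b hab hww
    have heq : x ((a:ℕ):ℤ) = x ((b:ℕ):ℤ) := by rw [hxw a, hxw b, hww]
    have hcw := sft_repeat hx (show ((a:ℕ):ℤ) < ((b:ℕ):ℤ) by exact_mod_cast hab) heq
    set d := (((b:ℕ):ℤ) - ((a:ℕ):ℤ)).toNat with hd
    have hd1 : 0 < d := by omega
    have hble : (b:ℕ) < j := b.isLt
    have : sInf (periodSet A) ≤ d := Nat.sInf_le ⟨hd1, cw_period A hd1 hcw⟩
    omega
  intro i i' hii
  by_contra hne
  rcases lt_trichotomy (i:ℕ) (i':ℕ) with h | h | h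
  · exact key i i' h hii
  · exact hne (Fin.ext h)
  · exact key i' i h hii.symm

/-- The key counting estimate: if the minimal period exceeds `j`, then a legal word of length `j`
is determined by its set of symbols, so there are at most `M.choose j` legal words. -/
lemma legal_card_le_choose {j : ℕ} (hjg : j < sInf (periodSet A)) :
    (legalWords A j).ncard ≤ Nat.choose M j := by
  classical
  have hmaps : ∀ w ∈ legalWords A j,
      Finset.image w Finset.univ ∈ (Finset.univ : Finset (Fin M)).powersetCard j := by
    intro w hw
    rw [Finset.mem_powersetCard]
    refine ⟨Finset.subset_univ _, ?_⟩
    rw [Finset.card_image_of_injective _ (legal_word_injective hjg hw), Finset.card_univ,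
      Fintype.card_fin]
  have hinj : Set.InjOn (fun w : Fin j → Fin M => Finset.image w Finset.univ)
      (legalWords A j) := by
    intro w hw w' hw' himg
    by_contra hne
    simp only at himg
    obtain ⟨x, hx, hxw⟩ := hw
    obtain ⟨x', hx', hxw'⟩ := hw'
    have hwinj : Function.Injective w := legal_word_injective hjg ⟨x, hx, hxw⟩
    have hw'inj : Function.Injective w' := legal_word_injective hjg ⟨x', hx', hxw'⟩
    have hex : ∀ p : Fin j, ∃ q : Fin j, w' q = w p := by
      intro p
      have : w p ∈ Finset.image w' Finset.univ := by
        rw [← himg]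
        exact Finset.mem_image_of_mem w (Finset.mem_univ p)
      rcases Finset.mem_image.mp this with ⟨q, _, hq⟩
      exact ⟨q, hq⟩
    choose σ hσ using hex
    have hσinj : Function.Injective σ := by
      intro u v huv
      apply hwinj
      rw [← hσ u, ← hσ v, huv]
    have hσsurj : Function.Surjective σ := Finite.surjective_of_injective hσinj
    have hne2 : ∃ p, σ p ≠ p := by
      by_contra hc
      push_neg at hc
      exact hne (funext fun q => by rw [← hσ q, hc q])
    set s : Finset (Fin j) := Finset.univ.filter (fun q => σ q ≠ q) with hs
    have hsne : s.Nonempty := ⟨hne2.choose, by simp [hs, hne2.choose_spec]⟩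
    set p := s.min' hsne with hpdef
    have hpne : σ p ≠ p := by
      have := s.min'_mem hsne
      simp only [hs, Finset.mem_filter] at this
      exact this.2
    have hfix : ∀ q, q < p → σ q = q := by
      intro q hq
      by_contra hqc
      exact absurd (s.min'_le q (by simp [hs, hqc])) (not_le.mpr hq)
    have hplt : p < σ p := by
      rcases lt_trichotomy (σ p) p with h | h | h
      · exact absurd (hσinj (hfix (σ p) h)) hpne
      · exact absurd h hpne
      · exact h
    obtain ⟨b, hb⟩ := hσsurj p
    have hpb : p < b := by
      rcases lt_trichotomy b p with h | h | h
      · have : σ b = b := hfix b h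
        rw [hb] at this
        exact absurd this.symm (ne_of_lt h)
      · rw [h] at hb
        exact absurd hb hpne
      · exact h
    set pa := (p:ℕ) with hpa
    set pb := (b:ℕ) with hpb'
    set qa := ((σ p):ℕ) with hqa
    have hd1 : 0 < pb - pa := by
      have : pa < pb := hpb
      omega
    have hd2 : 0 < qa - pa := by
      have : pa < qa := hplt
      omega
    set d1 := pb - pa with hd1'
    set d2 := qa - pa with hd2'
    have hpbj : pb < j := b.isLt
    have hqaj : qa < j := (σ p).isLt
    have hWB : x' ((pa:ℕ):ℤ) = x (((pb:ℕ)):ℤ) := by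
      have h1 : w' (σ b) = w b := hσ b
      rw [hb] at h1
      rw [hxw' p, hxw b] at *
      · exact h1
    have hWA : x' ((qa:ℕ):ℤ) = x ((pa:ℕ):ℤ) := by
      have h1 : w' (σ p) = w p := hσ p
      rw [hxw' (σ p), hxw p] at *
      exact h1
    set c : ℕ → Fin M := fun r => if r < d1 then x ((pa:ℤ) + r) else x' ((pa:ℤ) + ((r - d1 : ℕ):ℤ))
      with hc
    have hcw : IsCW A (d1 + d2) c := by
      intro r hr
      by_cases hA : r + 1 < d1
      · have e1 : (r+1) % (d1+d2) = r + 1 := Nat.mod_eq_of_lt (by omega)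
        rw [e1]
        simp only [hc]
        rw [if_pos (by omega), if_pos hA]
        have := hx ((pa:ℤ) + r)
        have e2 : (pa:ℤ) + ((r:ℕ)+1:ℕ) = (pa:ℤ) + r + 1 := by push_cast; ring
        rw [e2]
        exact this
      · by_cases hB : r + 1 = d1
        · have e1 : (r+1) % (d1+d2) = r + 1 := Nat.mod_eq_of_lt (by omega)
          rw [e1]
          simp only [hc]
          rw [if_pos (by omega), if_neg (by omega)]
          have e2 : (r + 1 - d1 : ℕ) = 0 := by omega
          rw [e2]
          have e3 : ((pa:ℤ) + ((0:ℕ):ℤ)) = (pa:ℤ) := by push_cast; ring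
          rw [e3, hWB]
          have := hx ((pa:ℤ) + r)
          have e4 : ((pb:ℕ):ℤ) = (pa:ℤ) + r + 1 := by
            have : pa + r + 1 = pb := by omega
            push_cast [← this]
            ring
          rw [e4]
          exact this
        · by_cases hC : r + 1 < d1 + d2
          · have e1 : (r+1) % (d1+d2) = r + 1 := Nat.mod_eq_of_lt hC
            rw [e1]
            simp only [hc]
            rw [if_neg (by omega), if_neg (by omega)]
            have := hx' ((pa:ℤ) + ((r - d1 : ℕ):ℤ))
            have e2 : ((pa:ℤ) + ((r + 1 - d1 : ℕ):ℤ)) = (pa:ℤ) + ((r - d1:ℕ):ℤ) + 1 := by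
              have : r + 1 - d1 = (r - d1) + 1 := by omega
              rw [this]
              push_cast
              ring
            rw [e2]
            exact this
          · have hD : r + 1 = d1 + d2 := by omega
            have e1 : (r+1) % (d1+d2) = 0 := by rw [hD]; exact Nat.mod_self _
            rw [e1]
            simp only [hc]
            rw [if_neg (by omega), if_pos (by omega)]
            have e0 : ((pa:ℤ) + ((0:ℕ):ℤ)) = (pa:ℤ) := by push_cast; ring
            rw [e0, ← hWA]
            have := hx' ((pa:ℤ) + ((r - d1 : ℕ):ℤ))
            have e2 : ((qa:ℕ):ℤ) = (pa:ℤ) + ((r - d1:ℕ):ℤ) + 1 := by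
              have : pa + (r - d1) + 1 = qa := by omega
              push_cast [← this]
              ring
            rw [e2]
            exact this
    have hval : ∀ r, r < d1 + d2 → c r ∈ Finset.image w Finset.univ := by
      intro r hr
      by_cases hA : r < d1
      · have : c r = w ⟨pa + r, by omega⟩ := by
          simp only [hc]
          rw [if_pos hA, ← hxw ⟨pa + r, by omega⟩]
          congr 1
          all_goals (push_cast; try ring)
        rw [this]
        exact Finset.mem_image_of_mem w (Finset.mem_univ _)
      · have : c r = w' ⟨pa + (r - d1), by omega⟩ := by
          simp only [hc]
          rw [if_neg hA, ← hxw' ⟨pa + (r - d1), by omega⟩]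
          congr 1
          all_goals (push_cast; try ring)
        rw [this, himg]
        exact Finset.mem_image_of_mem w' (Finset.mem_univ _)
    obtain ⟨d', u', hd'pos, hcw', hvals', hinj'⟩ :=
      exists_simple (d1 + d2) (by omega) c hcw
    have hd'j : d' ≤ j := by
      have hcard : (Finset.univ : Finset (Fin d')).card ≤ (Finset.image w Finset.univ).card := by
        apply Finset.card_le_card_of_injOn (fun r : Fin d' => u' (r:ℕ))
        · intro r _
          obtain ⟨s', hs', hvv⟩ := hvals' (r:ℕ) r.isLt
          simp only [Finset.mem_coe]
          rw [hvv]
          exact hval s' hs'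
        · intro r _ r' _ hrr
          by_contra hne'
          rcases lt_trichotomy (r:ℕ) (r':ℕ) with h | h | h
          · exact hinj' (r:ℕ) (r':ℕ) h r'.isLt hrr
          · exact hne' (Fin.ext h)
          · exact hinj' (r':ℕ) (r:ℕ) h r.isLt hrr.symm
      rw [Finset.card_univ, Fintype.card_fin,
        Finset.card_image_of_injective _ hwinj, Finset.card_univ, Fintype.card_fin] at hcard
      exact hcard
    have : sInf (periodSet A) ≤ d' := Nat.sInf_le ⟨hd'pos, cw_period A hd'pos hcw'⟩
    omega
  calc (legalWords A j).ncard
      ≤ (((Finset.univ : Finset (Fin M)).powersetCard j : Finset (Finset (Fin M))) :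
          Set (Finset (Fin M))).ncard := by
        apply Set.ncard_le_ncard_of_injOn _ (fun w hw => ?_) hinj (Set.toFinite _)
        exact hmaps w hw
    _ = Nat.choose M j := by
        rw [Set.ncard_coe_finset, Finset.card_powersetCard, Finset.card_univ, Fintype.card_fin]

end Aux

/-- **Short periodic orbits in subshifts of finite type.** A nonempty subshift of finite type on
`M` symbols with topological entropy `h` (containing at least one periodic point) contains a
periodic point of period at most `1 + M e^{1-h}`. -/
theorem sft_exists_short_periodic_orbit {M : ℕ} (hM : 0 < M) (A : Fin M → Fin M → Prop)
    (hper : ∃ x ∈ SFT A, ∃ p : ℕ, 0 < p ∧ (shiftMap M)^[p] x = x) :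
    ∃ x ∈ SFT A, ∃ k : ℕ, 0 < k ∧
      (k : ℝ) ≤ 1 + M * Real.exp (1 - sftEntropy A) ∧ (shiftMap M)^[k] x = x := by
  classical
  have hSne : (SFT A).Nonempty := by
    obtain ⟨x, hx, _⟩ := hper
    exact ⟨x, hx⟩
  have hPne : (periodSet A).Nonempty := by
    obtain ⟨x, hx, p, hp, hfix⟩ := hper
    exact ⟨p, hp, x, hx, hfix⟩
  obtain ⟨hgpos, xg, hxg, hxgfix⟩ := Nat.sInf_mem hPne
  set g := sInf (periodSet A) with hgdef
  refine ⟨xg, hxg, g, hgpos, ?_, hxgfix⟩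
  have hexp : (0:ℝ) < Real.exp (1 - sftEntropy A) := Real.exp_pos _
  have hMR : (1:ℝ) ≤ (M:ℝ) := by exact_mod_cast hM
  rcases Nat.lt_or_ge g 2 with hg1 | hg2
  · have hg1' : g = 1 := by omega
    rw [hg1']
    push_cast
    nlinarith
  · set j := g - 1 with hjdef
    have hj1 : 1 ≤ j := by omega
    have hjg : j < g := by omega
    have hcount : (legalWords A j).ncard ≤ Nat.choose M j := legal_card_le_choose hjg
    have hWpos : ∀ n : ℕ, 1 ≤ (legalWords A n).ncard := legal_one_le A hSne
    have hjM : j ≤ M := by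
      by_contra hc
      push_neg at hc
      rw [Nat.choose_eq_zero_of_lt hc] at hcount
      have := hWpos j
      omega
    -- Fekete's lemma
    set u : ℕ → ℝ := fun n => Real.log ((legalWords A n).ncard) with hu
    have hunn : ∀ n, 0 ≤ u n := fun n =>
      Real.log_nonneg (by exact_mod_cast hWpos n)
    have hsub : Subadditive u := by
      intro a b
      have h1 : ((legalWords A (a+b)).ncard : ℝ) ≤
          ((legalWords A a).ncard : ℝ) * ((legalWords A b).ncard : ℝ) := by
        exact_mod_cast legal_subadd A a b
      have h2 : (0:ℝ) < ((legalWords A a).ncard : ℝ) := by exact_mod_cast hWpos a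
      have h3 : (0:ℝ) < ((legalWords A b).ncard : ℝ) := by exact_mod_cast hWpos b
      have h4 : (0:ℝ) < ((legalWords A (a+b)).ncard : ℝ) := by exact_mod_cast hWpos (a+b)
      calc u (a+b) ≤ Real.log (((legalWords A a).ncard : ℝ) * ((legalWords A b).ncard : ℝ)) :=
            Real.log_le_log h4 h1
        _ = u a + u b := Real.log_mul h2.ne' h3.ne'
    have hbdd : BddBelow (Set.range fun n : ℕ => u n / n) := by
      refine ⟨0, ?_⟩
      rintro y ⟨n, rfl⟩
      exact div_nonneg (hunn n) (Nat.cast_nonneg n)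
    have hHeq : sftEntropy A = hsub.lim := by
      have : sftEntropy A = Filter.atTop.limsup (fun k : ℕ => u k / k) := rfl
      rw [this]
      exact (hsub.tendsto_lim hbdd).limsup_eq
    have hHle : sftEntropy A ≤ u j / j := by
      rw [hHeq]
      exact hsub.lim_le_div hbdd (by omega)
    -- numeric estimates
    have hjR : (1:ℝ) ≤ (j:ℝ) := by exact_mod_cast hj1
    have hjRpos : (0:ℝ) < (j:ℝ) := by linarith
    have hCpos : 0 < Nat.choose M j := Nat.choose_pos hjM
    have hCR : (1:ℝ) ≤ (Nat.choose M j : ℝ) := by exact_mod_cast hCpos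
    have hstep1 : (Nat.choose M j) * (Nat.factorial j) ≤ M ^ j := by
      have h := Nat.descFactorial_le_pow M j
      rw [Nat.descFactorial_eq_factorial_mul_choose] at h
      rw [mul_comm]
      exact h
    have hstep2 : ((j:ℝ)) ^ j ≤ (Nat.factorial j : ℝ) * Real.exp 1 ^ j := by
      have h := Real.sum_le_exp_of_nonneg (x := (j:ℝ)) (by positivity) (j+1)
      have hterm : (j:ℝ)^j / (Nat.factorial j : ℝ) ≤ Real.exp (j:ℝ) := by
        refine le_trans ?_ h
        have hmem : j ∈ Finset.range (j+1) := Finset.self_mem_range_succ j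
        have hnn : ∀ i ∈ Finset.range (j+1), (0:ℝ) ≤ (j:ℝ)^i / (Nat.factorial i : ℝ) := by
          intro i _
          positivity
        exact Finset.single_le_sum hnn hmem
      rw [Real.exp_one_pow]
      have hfpos : (0:ℝ) < (Nat.factorial j : ℝ) := by
        exact_mod_cast Nat.factorial_pos j
      calc ((j:ℝ)) ^ j = ((j:ℝ)^j / (Nat.factorial j : ℝ)) * (Nat.factorial j : ℝ) := by
            field_simp
        _ ≤ Real.exp (j:ℝ) * (Nat.factorial j : ℝ) := by
            apply mul_le_mul_of_nonneg_right hterm hfpos.le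
        _ = (Nat.factorial j : ℝ) * Real.exp (j:ℝ) := by ring
    have hprod : ((Nat.choose M j : ℝ)) * (j:ℝ)^j ≤ (M:ℝ)^j * Real.exp 1 ^ j := by
      calc ((Nat.choose M j : ℝ)) * (j:ℝ)^j
          ≤ (Nat.choose M j : ℝ) * ((Nat.factorial j : ℝ) * Real.exp 1 ^ j) := by
            apply mul_le_mul_of_nonneg_left hstep2 (by positivity)
        _ = (((Nat.choose M j) * (Nat.factorial j) : ℕ) : ℝ) * Real.exp 1 ^ j := by
            push_cast
            rw [Real.exp_one_pow]
            ring
        _ ≤ ((M ^ j : ℕ) : ℝ) * Real.exp 1 ^ j := by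
            apply mul_le_mul_of_nonneg_right _ (by positivity)
            exact_mod_cast hstep1
        _ = (M:ℝ)^j * Real.exp 1 ^ j := by push_cast; ring
    have hlog : Real.log (Nat.choose M j : ℝ) + (j:ℝ) * Real.log (j:ℝ) ≤
        (j:ℝ) * Real.log (M:ℝ) + (j:ℝ) := by
      have hlogA := Real.log_le_log (by positivity) hprod
      rw [Real.log_mul (by positivity) (by positivity),
        Real.log_mul (by positivity) (by positivity),
        Real.log_pow, Real.log_pow, Real.log_pow, Real.log_exp] at hlogA
      push_cast at hlogA ⊢
      linarith
    have hujC : u j ≤ Real.log (Nat.choose M j : ℝ) := by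
      apply Real.log_le_log (by exact_mod_cast hWpos j)
      exact_mod_cast hcount
    have hHC : sftEntropy A * (j:ℝ) ≤ Real.log (Nat.choose M j : ℝ) := by
      have := hHle
      rw [div_eq_mul_inv] at this
      calc sftEntropy A * (j:ℝ) ≤ (u j / (j:ℝ)) * (j:ℝ) := by
            apply mul_le_mul_of_nonneg_right hHle hjRpos.le
        _ = u j := by field_simp
        _ ≤ _ := hujC
    have hfinal : sftEntropy A + Real.log (j:ℝ) ≤ Real.log (M:ℝ) + 1 := by
      nlinarith [hHC, hlog, hjRpos]
    -- conclude
    have hjle : (j:ℝ) ≤ (M:ℝ) * Real.exp (1 - sftEntropy A) := by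
      have h1 : (j:ℝ) = Real.exp (Real.log (j:ℝ)) := (Real.exp_log hjRpos).symm
      have h2 : (M:ℝ) * Real.exp (1 - sftEntropy A) =
          Real.exp (Real.log (M:ℝ) + (1 - sftEntropy A)) := by
        rw [Real.exp_add, Real.exp_log (by linarith : (0:ℝ) < (M:ℝ))]
      rw [h1, h2]
      apply Real.exp_le_exp.mpr
      linarith
    have hgj : (g:ℝ) = (j:ℝ) + 1 := by
      have : g = j + 1 := by omega
      rw [this]
      push_cast
      ring
    rw [hgj]
    linarith
end

section
/- Let Σ_A be a subshift of finite type on M symbols in which every periodic point has period at least k+1. Then any legal word of length k in Σ_A contains k pairwise distinct symbols, and two legal words of length k containing the same set of symbols must be equal. Consequently the number of legal words of length k is at most the binomial coefficient C(M, k). -/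
lemma shiftMap_iterate (M : ℕ) (p : ℕ) (x : ℤ → Fin M) :
    (shiftMap M)^[p] x = fun i => x (i + p) := by
  induction p with
  | zero => simp
  | succ n ih =>
      rw [Function.iterate_succ_apply', ih]
      funext i
      simp [shiftMap]
      ring_nf
lemma mod_key (p : ℕ) (hp : 0 < p) (i : ℤ) :
    ((i+1) % (p:ℤ)).toNat = ((i % p).toNat + 1) % p := by
  have h1 : (0:ℤ) ≤ i % p := Int.emod_nonneg _ (by positivity)
  have h2 : (0:ℤ) ≤ (i+1) % p := Int.emod_nonneg _ (by positivity)
  have : ((((i % p).toNat + 1) % p : ℕ) : ℤ) = (i+1) % p := by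
    push_cast
    rw [Int.toNat_of_nonneg h1, Int.emod_add_emod]
  omega

/-- From a legal cycle of length `p ≤ k` we get a contradiction. -/
lemma cyc {M k : ℕ} (A : Fin M → Fin M → Prop)
    (hper : ∀ x ∈ SFT A, ∀ p : ℕ, 0 < p → (shiftMap M)^[p] x = x → k + 1 ≤ p)
    (p : ℕ) (hp : 0 < p) (hpk : p ≤ k) (c : ℕ → Fin M)
    (hc : ∀ m, A (c (m % p)) (c ((m+1) % p))) : False := by
  set y : ℤ → Fin M := fun n => c (n % p).toNat with hy
  have hmem : y ∈ SFT A := by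
    intro i
    have := hc (i % p).toNat
    have h1 : (0:ℤ) ≤ i % p := Int.emod_nonneg _ (by positivity)
    have hlt : (i % p).toNat < p := by
      have := Int.emod_lt_of_pos i (b := p) (by positivity); omega
    have hmm : (i % p).toNat % p = (i % p).toNat := Nat.mod_eq_of_lt hlt
    rw [hmm] at this
    have key := mod_key p hp i
    simpa [hy, key] using this
  have hfix : (shiftMap M)^[p] y = y := by
    rw [shiftMap_iterate]
    funext n
    simp only [hy]
    congr 1
    rw [show (n + (p:ℤ)) = n + (p:ℤ)*1 by ring, Int.add_mul_emod_self_left]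
  have := hper y hmem p hp hfix
  omega

/-- **Words in subshifts without short periodic orbits.** If every periodic point of `Σ_A` has
period at least `k+1`, then every legal `k`-word has pairwise distinct symbols, a legal `k`-word
is determined by the set of symbols it contains, and consequently there are at most `C(M,k)`
legal `k`-words. -/
theorem sft_words_determined_by_symbols {M k : ℕ} (A : Fin M → Fin M → Prop)
    (hper : ∀ x ∈ SFT A, ∀ p : ℕ, 0 < p → (shiftMap M)^[p] x = x → k + 1 ≤ p) :
    (∀ w ∈ legalWords A k, Function.Injective w) ∧
    (∀ u ∈ legalWords A k, ∀ v ∈ legalWords A k, Set.range u = Set.range v → u = v) ∧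
    (legalWords A k).ncard ≤ Nat.choose M k := by
  -- Part 1 : injectivity
  have key : ∀ w ∈ legalWords A k, ∀ i j : Fin k, (i:ℕ) < (j:ℕ) → w i = w j → False := by
    rintro w ⟨x, hx, hxw⟩ i j hlt hij
    set p : ℕ := (j:ℕ) - (i:ℕ) with hpdef
    have hp : 0 < p := by omega
    have hpk : p ≤ k := by have := j.isLt; omega
    refine cyc A hper p hp hpk (fun m => x (((i:ℕ) + m % p : ℕ) : ℤ)) ?_
    intro m
    have hmlt : m % p < p := Nat.mod_lt _ hp
    have hmod : m % p % p = m % p := Nat.mod_eq_of_lt hmlt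
    have hmod2 : (m+1) % p % p = (m+1) % p := Nat.mod_eq_of_lt (Nat.mod_lt _ hp)
    rw [hmod, hmod2]
    have hd := Nat.div_add_mod m p
    have e2 : x ((i:ℕ)) = x ((j:ℕ)) := by rw [hxw i, hxw j, hij]
    rcases Nat.lt_or_ge (m % p) (p - 1) with h | h
    · -- no wrap
      have h1 : (m+1) % p = m % p + 1 := by
        have hm1 : m + 1 = p * (m / p) + (m % p + 1) := by omega
        rw [hm1, Nat.mul_add_mod, Nat.mod_eq_of_lt (by omega)]
      rw [h1]
      have hx' := hx (((i:ℕ) + m % p : ℕ) : ℤ)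
      have e3 : (((i:ℕ) + (m % p + 1) : ℕ) : ℤ) = (((i:ℕ) + m % p : ℕ) : ℤ) + 1 := by
        push_cast; ring
      rw [e3]
      exact hx'
    · -- wrap around
      have hpm : m % p = p - 1 := by omega
      have h0 : (m+1) % p = 0 := by
        have hm1 : m + 1 = p * (m / p) + p := by omega
        rw [hm1]
        simp
      rw [h0]
      have hx' := hx ((((j:ℕ)) : ℤ) - 1)
      have e1 : (((i:ℕ) + m % p : ℕ) : ℤ) = (((j:ℕ)) : ℤ) - 1 := by push_cast; omega
      have e4 : (((i:ℕ) + 0 : ℕ) : ℤ) = (((i:ℕ)) : ℤ) := by push_cast; ring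
      rw [e1, e4, e2]
      simpa using hx'
  have inj : ∀ w ∈ legalWords A k, Function.Injective w := by
    intro w hw i j hij
    by_contra hne
    rcases Nat.lt_or_ge (i:ℕ) (j:ℕ) with h | h
    · exact key w hw i j h hij
    · have h2 : (j:ℕ) < (i:ℕ) := by
        rcases Nat.lt_or_ge (j:ℕ) (i:ℕ) with h' | h'
        · exact h'
        · exact absurd (Fin.ext (le_antisymm h' h)) hne
      exact key w hw j i h2 hij.symm
  have det : ∀ u ∈ legalWords A k, ∀ v ∈ legalWords A k, Set.range u = Set.range v → u = v := by
    intro u hu v hv hrange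
    obtain ⟨xu, hxu, hxuw⟩ := hu
    obtain ⟨xv, hxv, hxvw⟩ := hv
    have hiu : Function.Injective u := inj u ⟨xu, hxu, hxuw⟩
    have hiv : Function.Injective v := inj v ⟨xv, hxv, hxvw⟩
    have hσ : ∀ t : Fin k, ∃ s : Fin k, v s = u t := by
      intro t
      have : u t ∈ Set.range v := hrange ▸ Set.mem_range_self t
      exact this
    choose σ hσv using hσ
    have hσinj : Function.Injective σ := by
      intro a b hab
      apply hiu
      rw [← hσv a, ← hσv b, hab]
    have hmono : StrictMono σ := by
      rcases k with _ | n
      · intro a; exact absurd a.isLt (by omega)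
      · rw [Fin.strictMono_iff_lt_succ]
        intro t
        by_contra hcon
        have hne2 : σ t.succ ≠ σ t.castSucc := fun h => by
          have := hσinj h
          exact absurd (congrArg Fin.val this) (by simp)
        have hlt2 : (σ t.succ : ℕ) < (σ t.castSucc : ℕ) := by
          rcases Nat.lt_or_ge (σ t.succ : ℕ) (σ t.castSucc : ℕ) with h | h
          · exact h
          · exfalso
            rcases Nat.lt_or_ge (σ t.castSucc : ℕ) (σ t.succ : ℕ) with h' | h'
            · exact hcon h'
            · exact hne2 (Fin.ext (le_antisymm h' h))
        set jj := σ t.succ with hjj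
        set jj' := σ t.castSucc with hjj'
        set p : ℕ := (jj' : ℕ) - (jj : ℕ) + 1 with hpdef
        have hp : 0 < p := by omega
        have hpk : p ≤ n + 1 := by have := jj'.isLt; omega
        refine cyc A hper p hp hpk (fun m => xv (((jj : ℕ) + m % p : ℕ) : ℤ)) ?_
        intro m
        have hmlt : m % p < p := Nat.mod_lt _ hp
        have hmod : m % p % p = m % p := Nat.mod_eq_of_lt hmlt
        have hmod2 : (m+1) % p % p = (m+1) % p := Nat.mod_eq_of_lt (Nat.mod_lt _ hp)
        rw [hmod, hmod2]
        have hd := Nat.div_add_mod m p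
        rcases Nat.lt_or_ge (m % p) (p - 1) with h | h
        · -- no wrap
          have h1 : (m+1) % p = m % p + 1 := by
            have hm1 : m + 1 = p * (m / p) + (m % p + 1) := by omega
            rw [hm1, Nat.mul_add_mod, Nat.mod_eq_of_lt (by omega)]
          rw [h1]
          have hx' := hxv (((jj : ℕ) + m % p : ℕ) : ℤ)
          have e3 : (((jj : ℕ) + (m % p + 1) : ℕ) : ℤ) = (((jj : ℕ) + m % p : ℕ) : ℤ) + 1 := by
            push_cast; ring
          rw [e3]
          exact hx'
        · -- wrap: use the u-transition from a = u t.castSucc to b = u t.succ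
          have hpm : m % p = p - 1 := by omega
          have h0 : (m+1) % p = 0 := by
            have hm1 : m + 1 = p * (m / p) + p := by omega
            rw [hm1]
            simp
          rw [h0]
          have e1 : ((jj : ℕ) + m % p : ℕ) = ((jj' : ℕ)) := by omega
          have e4 : ((jj : ℕ) + 0 : ℕ) = ((jj : ℕ)) := by simp
          rw [e1, e4, hxvw jj', hxvw jj, hσv, hσv]
          have hx' := hxu (((t.castSucc : ℕ) : ℤ))
          have e5 : (((t.castSucc : ℕ) : ℤ)) + 1 = (((t.succ : ℕ) : ℤ)) := by
            simp [Fin.val_succ]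
          rw [e5] at hx'
          rw [hxuw t.castSucc, hxuw t.succ] at hx'
          exact hx'
    have hσid : σ = id := by
      apply (hmono.range_inj strictMono_id).mp
      rw [Set.range_id]
      exact Set.range_eq_univ.mpr (Finite.injective_iff_surjective.mp hσinj)
    funext t
    rw [← hσv t, hσid]
    rfl
  refine ⟨inj, det, ?_⟩
  -- Part 3: counting
  classical
  set f : (Fin k → Fin M) → Finset (Fin M) := fun w => Finset.image w Finset.univ with hf
  have hinjOn : Set.InjOn f (legalWords A k) := by
    intro u hu v hv huv
    apply det u hu v hv
    have h2 : ((f u : Finset (Fin M)) : Set (Fin M)) = ((f v : Finset (Fin M)) : Set (Fin M)) := by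
      rw [huv]
    simpa [hf, Set.image_univ] using h2
  have hsub : f '' (legalWords A k) ⊆ ↑(Finset.powersetCard k (Finset.univ : Finset (Fin M))) := by
    rintro s ⟨w, hw, rfl⟩
    rw [Finset.mem_coe, Finset.mem_powersetCard_univ]
    rw [Finset.card_image_of_injective _ (inj w hw)]
    simp
  calc (legalWords A k).ncard = (f '' (legalWords A k)).ncard := (Set.ncard_image_of_injOn hinjOn).symm
    _ ≤ (↑(Finset.powersetCard k (Finset.univ : Finset (Fin M))) : Set (Finset (Fin M))).ncard := by
        apply Set.ncard_le_ncard hsub (Finset.finite_toSet _)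
    _ = (Finset.powersetCard k (Finset.univ : Finset (Fin M))).card := Set.ncard_coe_finset _
    _ = Nat.choose M k := by rw [Finset.card_powersetCard]; simp
end
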